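/- Fix a tabular quasi-normal modal logic L = Log(𝓕) with 𝓕 a finite set of finite rooted frames (roots named 0), a modal formula φ, and σ ⊆ sig(φ). Fix a σ-encoding for L and the associated translations rt_{F,L} for F ∈ 𝓕. If for each F ∈ 𝓕, ξ_F ∈ PL(σ_F) is a uniform σ_F-interpolant for tr_{F,0}(φ) in propositional logic, then the disjunction ⋁_{F∈𝓕} rt_{F,L}(ξ_F) is a strongest L(σ)-implicate of φ. -/

import Mathlib

inductive MForm (α : Type) : Type
  | top : MForm α
  | atom : α → MForm α
  | neg : MForm α → MForm α
  | and : MForm α → MForm α → MForm α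
  | box : MForm α → MForm α
deriving DecidableEq

namespace MForm

def imp {α : Type} (φ ψ : MForm α) : MForm α := neg (and φ (neg ψ))

def dia {α : Type} (φ : MForm α) : MForm α := neg (box (neg φ))

def sig {α : Type} [DecidableEq α] : MForm α → Finset α
  | top => ∅
  | atom p => {p}
  | neg φ => sig φ
  | and φ ψ => sig φ ∪ sig ψ
  | box φ => sig φ

def IsProp {α : Type} : MForm α → Prop
  | top => True
  | atom _ => True
  | neg φ => IsProp φ
  | and φ ψ => IsProp φ ∧ IsProp ψ
  | box _ => False

def subf {α : Type} [DecidableEq α] : MForm α → Finset (MForm α)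
  | top => {top}
  | atom p => {atom p}
  | neg φ => insert (neg φ) (subf φ)
  | and φ ψ => insert (and φ ψ) (subf φ ∪ subf ψ)
  | box φ => insert (box φ) (subf φ)

/-- The dag-size of a formula: the number of its distinct subformulas. -/
def dagSize {α : Type} [DecidableEq α] (φ : MForm α) : ℕ := (subf φ).card

end MForm

def psat {α : Type} (v : α → Prop) : MForm α → Prop
  | .top => True
  | .atom p => v p
  | .neg φ => ¬ psat v φ
  | .and φ ψ => psat v φ ∧ psat v ψ
  | .box _ => True

/-- Propositional tautology. -/
def PTaut {α : Type} (φ : MForm α) : Prop := ∀ v : α → Prop, psat v φ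

def bigAnd {α : Type} : List (MForm α) → MForm α
  | [] => .top
  | φ :: l => .and φ (bigAnd l)

def bigOr {α : Type} (l : List (MForm α)) : MForm α := .neg (bigAnd (l.map .neg))

def boxIter {α : Type} : ℕ → MForm α → MForm α
  | 0, φ => φ
  | n + 1, φ => .box (boxIter n φ)

def diaIter {α : Type} : ℕ → MForm α → MForm α
  | 0, φ => φ
  | n + 1, φ => MForm.dia (diaIter n φ)

/-- `□^{≤n} φ`. -/
def ble {α : Type} (n : ℕ) (φ : MForm α) : MForm α :=
  bigAnd ((List.range (n + 1)).map (fun k => boxIter k φ))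

/-- `◇^{≤n} φ`. -/
def dle {α : Type} (n : ℕ) (φ : MForm α) : MForm α := .neg (ble n (.neg φ))

def substAtoms {α β : Type} (s : α → MForm β) : MForm α → MForm β
  | .top => .top
  | .atom a => s a
  | .neg φ => .neg (substAtoms s φ)
  | .and φ ψ => .and (substAtoms s φ) (substAtoms s ψ)
  | .box φ => .box (substAtoms s φ)


/-- A finite rooted (pointed) frame. -/
structure FFrame where
  W : Type
  fin : Fintype W
  deq : DecidableEq W
  R : W → W → Prop
  root : W
  rooted : ∀ w, Relation.ReflTransGen R root w

attribute [instance] FFrame.fin FFrame.deq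

def sat (F : FFrame) (V : F.W → ℕ → Prop) : F.W → MForm ℕ → Prop
  | _, .top => True
  | w, .atom p => V w p
  | w, .neg φ => ¬ sat F V w φ
  | w, .and φ ψ => sat F V w φ ∧ sat F V w ψ
  | w, .box φ => ∀ v, F.R w v → sat F V v φ

/-- The logic determined by a (finite) family of finite rooted frames. -/
def Log {ι : Type} (Fr : ι → FFrame) : Set (MForm ℕ) :=
  {φ | ∀ i, ∀ V : (Fr i).W → ℕ → Prop, sat (Fr i) V (Fr i).root φ}

def StrImp (L : Set (MForm ℕ)) (σ : Finset ℕ) (φ χ : MForm ℕ) : Prop :=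
  χ.sig ⊆ σ ∧ φ.imp χ ∈ L ∧
    ∀ ψ : MForm ℕ, ψ.sig ⊆ σ → φ.imp ψ ∈ L → χ.imp ψ ∈ L

def CraigInt (L : Set (MForm ℕ)) (φ ψ χ : MForm ℕ) : Prop :=
  φ.imp χ ∈ L ∧ χ.imp ψ ∈ L ∧ χ.sig ⊆ φ.sig ∩ ψ.sig

def HasCIP (L : Set (MForm ℕ)) : Prop :=
  ∀ φ ψ : MForm ℕ, φ.imp ψ ∈ L → ∃ χ, CraigInt L φ ψ χ

def IsBisim (σ : Finset ℕ) (F₁ : FFrame) (V₁ : F₁.W → ℕ → Prop)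
    (F₂ : FFrame) (V₂ : F₂.W → ℕ → Prop) (Z : F₁.W → F₂.W → Prop) : Prop :=
  (∀ w₁ w₂, Z w₁ w₂ → ∀ p ∈ σ, (V₁ w₁ p ↔ V₂ w₂ p)) ∧
  (∀ w₁ w₂ v₁, Z w₁ w₂ → F₁.R w₁ v₁ → ∃ v₂, F₂.R w₂ v₂ ∧ Z v₁ v₂) ∧
  (∀ w₁ w₂ v₂, Z w₁ w₂ → F₂.R w₂ v₂ → ∃ v₁, F₁.R w₁ v₁ ∧ Z v₁ v₂)

def Bisim (σ : Finset ℕ) (F₁ : FFrame) (V₁ : F₁.W → ℕ → Prop) (w₁ : F₁.W)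
    (F₂ : FFrame) (V₂ : F₂.W → ℕ → Prop) (w₂ : F₂.W) : Prop :=
  ∃ Z, IsBisim σ F₁ V₁ F₂ V₂ Z ∧ Z w₁ w₂

def IsEME (σ : Finset ℕ) (Φ : Finset (MForm ℕ)) : Prop :=
  (∀ φ ∈ Φ, φ.IsProp ∧ φ.sig ⊆ σ) ∧
  (∀ v : ℕ → Prop, ∃ φ ∈ Φ, psat v φ) ∧
  (∀ φ ∈ Φ, ∀ ψ ∈ Φ, φ ≠ ψ → ∀ v : ℕ → Prop, ¬ (psat v φ ∧ psat v ψ))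

def IsCover (σ : Finset ℕ) (Φ : Finset (MForm ℕ)) (F : FFrame) (V : F.W → ℕ → Prop) : Prop :=
  ∀ φ ∈ Φ, ∀ w₁ w₂, sat F V w₁ φ → sat F V w₂ φ →
    ∀ χ : MForm ℕ, χ.IsProp → χ.sig ⊆ σ → (sat F V w₁ χ ↔ sat F V w₂ χ)

noncomputable def coverFml (σ : Finset ℕ) (Φ : Finset (MForm ℕ)) (N : ℕ) : MForm ℕ :=
  bigAnd (Φ.toList.map (fun φ => bigAnd (σ.toList.map (fun p =>
    MForm.imp (dle N (.and φ (.atom p))) (ble N (MForm.imp φ (.atom p)))))))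

/-- Satisfaction of `ML(Φ)`-formulas on abstract Φ-models `(F,f)`. -/
def asat (F : FFrame) (f : F.W → MForm ℕ) : F.W → MForm (MForm ℕ) → Prop
  | _, .top => True
  | w, .atom φ => f w = φ
  | w, .neg δ => ¬ asat F f w δ
  | w, .and δ₁ δ₂ => asat F f w δ₁ ∧ asat F f w δ₂
  | w, .box δ => ∀ v, F.R w v → asat F f v δ

def AbsBisim (F₁ : FFrame) (f₁ : F₁.W → MForm ℕ)
    (F₂ : FFrame) (f₂ : F₂.W → MForm ℕ) (Z : F₁.W → F₂.W → Prop) : Prop :=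
  (∀ w₁ w₂, Z w₁ w₂ → f₁ w₁ = f₂ w₂) ∧
  (∀ w₁ w₂ v₁, Z w₁ w₂ → F₁.R w₁ v₁ → ∃ v₂, F₂.R w₂ v₂ ∧ Z v₁ v₂) ∧
  (∀ w₁ w₂ v₂, Z w₁ w₂ → F₂.R w₂ v₂ → ∃ v₁, F₁.R w₁ v₁ ∧ Z v₁ v₂)

/-- Abstract Φ-bisimilarity of the roots of two abstract Φ-models. -/
def ABisimRoot (F₁ : FFrame) (f₁ : F₁.W → MForm ℕ) (F₂ : FFrame) (f₂ : F₂.W → MForm ℕ) : Prop :=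
  ∃ Z, AbsBisim F₁ f₁ F₂ f₂ Z ∧ Z F₁.root F₂.root

/-- Viewing a formula of `ML(Φ)` as a modal formula (atoms of `Φ` are formulas). -/
def flatten : MForm (MForm ℕ) → MForm ℕ
  | .top => .top
  | .atom φ => φ
  | .neg δ => .neg (flatten δ)
  | .and δ₁ δ₂ => .and (flatten δ₁) (flatten δ₂)
  | .box δ => .box (flatten δ)

/-- `δ ∈ ML(Φ)` is an abstract class identifier (for the Φ-bisimulation class of some
abstract Φ-model for `L = Log Fr`). -/
def IsClassId {ι : Type} (Fr : ι → FFrame) (Φ : Finset (MForm ℕ)) (δ : MForm (MForm ℕ)) : Prop :=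
  ∃ i, ∃ f : (Fr i).W → MForm ℕ, (∀ w, f w ∈ Φ) ∧
    ∀ j, ∀ f' : (Fr j).W → MForm ℕ, (∀ w, f' w ∈ Φ) →
      (asat (Fr j) f' (Fr j).root δ ↔ ABisimRoot (Fr j) f' (Fr i) f)

/-- A σ-encoding for `L = Log Fr`: a set `Γ` of σ-EMEs together with, for each `Φ ∈ Γ`,
a set `Δ Φ` of abstract class identifiers, such that every model based on a frame of the
family has a σ-cover `Φ ∈ Γ` and satisfies some `δ ∈ Δ Φ` at its root. -/
def IsEncoding {ι : Type} (Fr : ι → FFrame) (σ : Finset ℕ)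
    (Γ : Finset (Finset (MForm ℕ))) (Δ : Finset (MForm ℕ) → Finset (MForm (MForm ℕ))) : Prop :=
  (∀ Φ ∈ Γ, IsEME σ Φ) ∧
  (∀ Φ ∈ Γ, ∀ δ ∈ Δ Φ, MForm.sig δ ⊆ Φ ∧ IsClassId Fr Φ δ) ∧
  (∀ i, ∀ V : (Fr i).W → ℕ → Prop, ∃ Φ ∈ Γ, IsCover σ Φ (Fr i) V ∧
    ∃ δ ∈ Δ Φ, sat (Fr i) V (Fr i).root (flatten δ))

/-- `ξ^f`: replace each atom `p_w` by `◇^{≤N}(f(w) ∧ p)`. -/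
def xiSub (N : ℕ) (F : FFrame) (f : F.W → MForm ℕ) (ξ : MForm (ℕ × F.W)) : MForm ℕ :=
  substAtoms (fun pw => dle N (.and (f pw.2) (.atom pw.1))) ξ

/-- The abstract Φ-models on the frame `F` in the class identified by `δ`. -/
noncomputable def fList (F : FFrame) (Φ : Finset (MForm ℕ)) (δ : MForm (MForm ℕ)) :
    List (F.W → MForm ℕ) :=
  (((@Finset.filter (F.W → {x // x ∈ Φ})
      (fun f => asat F (fun w => (f w).1) F.root δ) (Classical.decPred _)
      Finset.univ)).toList).map (fun f w => (f w).1)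

/-- The backward translation `rt_{F,L}`. -/
noncomputable def rt (σ : Finset ℕ) (N : ℕ)
    (Γ : Finset (Finset (MForm ℕ))) (Δ : Finset (MForm ℕ) → Finset (MForm (MForm ℕ)))
    (F : FFrame) (ξ : MForm (ℕ × F.W)) : MForm ℕ :=
  bigAnd (Γ.toList.map (fun Φ =>
    bigAnd ((Δ Φ).toList.map (fun δ =>
      MForm.imp (.and (coverFml σ Φ N) (flatten δ))
        (bigOr ((fList F Φ δ).map (fun f => xiSub N F f ξ)))))))

/-- The forward translation `tr_{F,w}`. -/
noncomputable def tr (F : FFrame) : MForm ℕ → F.W → MForm (ℕ × F.W)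
  | .top, _ => .top
  | .atom p, w => .atom (p, w)
  | .neg φ, w => .neg (tr F φ w)
  | .and φ ψ, w => .and (tr F φ w) (tr F ψ w)
  | .box φ, w =>
      bigAnd (((@Finset.filter _ (F.R w) (Classical.decPred _) Finset.univ).toList).map
        (fun w' => tr F φ w'))

/-- The propositional valuation `v_M` over the atoms `σ_F = σ × W` induced by a model. -/
def vM (F : FFrame) (V : F.W → ℕ → Prop) : ℕ × F.W → Prop := fun pw => V pw.2 pw.1

/-- Uniform propositional `σ'`-interpolant. -/
def UPropInt {β : Type} [DecidableEq β] (σ' : Finset β) (χ ξ : MForm β) : Prop :=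
  ξ.IsProp ∧ ξ.sig ⊆ σ' ∧ PTaut (χ.imp ξ) ∧
    ∀ ψ : MForm β, ψ.IsProp → ψ.sig ∩ χ.sig ⊆ σ' → PTaut (χ.imp ψ) → PTaut (ξ.imp ψ)

/-- Propositional Craig interpolant for a tautological implication. -/
def PCraig {β : Type} [DecidableEq β] (χ₁ χ₂ ξ : MForm β) : Prop :=
  ξ.IsProp ∧ ξ.sig ⊆ χ₁.sig ∩ χ₂.sig ∧ PTaut (χ₁.imp ξ) ∧ PTaut (ξ.imp χ₂)
section Lemmas
open MForm

theorem psat_bigAnd {α : Type} {v : α → Prop} {l : List (MForm α)} :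
    psat v (bigAnd l) ↔ ∀ φ ∈ l, psat v φ := by
  induction l with
  | nil => simp [bigAnd, psat]
  | cons a l ih => simp [bigAnd, psat, ih]

theorem psat_bigOr {α : Type} {v : α → Prop} {l : List (MForm α)} :
    psat v (bigOr l) ↔ ∃ φ ∈ l, psat v φ := by
  have h1 : psat v (bigOr l) ↔ ¬ (∀ φ ∈ l.map MForm.neg, psat v φ) := by
    rw [bigOr]; simp only [psat]; rw [psat_bigAnd]
  rw [h1]
  constructor
  · intro h
    by_contra hc
    push_neg at hc
    apply h
    rintro ψ hψ
    obtain ⟨φ', hφ', rfl⟩ := List.mem_map.mp hψ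
    simpa [psat] using hc φ' hφ'
  · rintro ⟨φ', hφ', hs⟩ h
    have := h _ (List.mem_map_of_mem (f := MForm.neg) hφ')
    simp only [psat] at this
    exact this hs

theorem psat_imp {α : Type} {v : α → Prop} {φ ψ : MForm α} :
    psat v (φ.imp ψ) ↔ (psat v φ → psat v ψ) := by
  simp only [MForm.imp, psat]; tauto

theorem sat_bigAnd {F : FFrame} {V : F.W → ℕ → Prop} {w : F.W} {l : List (MForm ℕ)} :
    sat F V w (bigAnd l) ↔ ∀ φ ∈ l, sat F V w φ := by
  induction l with
  | nil => simp [bigAnd, sat]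
  | cons a l ih => simp [bigAnd, sat, ih]

theorem sat_bigOr {F : FFrame} {V : F.W → ℕ → Prop} {w : F.W} {l : List (MForm ℕ)} :
    sat F V w (bigOr l) ↔ ∃ φ ∈ l, sat F V w φ := by
  have h1 : sat F V w (bigOr l) ↔ ¬ (∀ φ ∈ l.map MForm.neg, sat F V w φ) := by
    rw [bigOr]; simp only [sat]; rw [sat_bigAnd]
  rw [h1]
  constructor
  · intro h
    by_contra hc
    push_neg at hc
    apply h
    rintro ψ hψ
    obtain ⟨φ', hφ', rfl⟩ := List.mem_map.mp hψ
    simpa [sat] using hc φ' hφ'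
  · rintro ⟨φ', hφ', hs⟩ h
    have := h _ (List.mem_map_of_mem (f := MForm.neg) hφ')
    simp only [sat] at this
    exact this hs

theorem sat_imp {F : FFrame} {V : F.W → ℕ → Prop} {w : F.W} {φ ψ : MForm ℕ} :
    sat F V w (φ.imp ψ) ↔ (sat F V w φ → sat F V w ψ) := by
  simp only [MForm.imp, sat]; tauto

/-- exact `n`-step reachability -/
def nstep (F : FFrame) : ℕ → F.W → F.W → Prop
  | 0, w, v => w = v
  | n+1, w, v => ∃ u, F.R w u ∧ nstep F n u v

theorem sat_boxIter {F : FFrame} {V : F.W → ℕ → Prop} {φ : MForm ℕ} :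
    ∀ {n : ℕ} {w : F.W}, sat F V w (boxIter n φ) ↔ ∀ v, nstep F n w v → sat F V v φ := by
  intro n
  induction n with
  | zero =>
    intro w
    simp only [boxIter, nstep]
    constructor
    · rintro h v rfl; exact h
    · intro h; exact h w rfl
  | succ n ih =>
    intro w
    simp only [boxIter, sat, nstep]
    constructor
    · rintro h v ⟨u, hu, hn⟩; exact ih.mp (h u hu) v hn
    · intro h u hu; exact ih.mpr (fun v hn => h v ⟨u, hu, hn⟩)

theorem sat_ble {F : FFrame} {V : F.W → ℕ → Prop} {φ : MForm ℕ} {N : ℕ} {w : F.W} :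
    sat F V w (ble N φ) ↔ ∀ k ≤ N, ∀ v, nstep F k w v → sat F V v φ := by
  simp only [ble, sat_bigAnd, List.mem_map, List.mem_range]
  constructor
  · rintro h k hk v hv
    exact (sat_boxIter.mp (h _ ⟨k, by omega, rfl⟩)) v hv
  · rintro h ψ ⟨k, hk, rfl⟩
    exact sat_boxIter.mpr (h k (by omega))

theorem sat_dle {F : FFrame} {V : F.W → ℕ → Prop} {φ : MForm ℕ} {N : ℕ} {w : F.W} :
    sat F V w (dle N φ) ↔ ∃ k ≤ N, ∃ v, nstep F k w v ∧ sat F V v φ := by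
  have h1 : sat F V w (dle N φ) ↔ ¬ sat F V w (ble N (.neg φ)) := Iff.rfl
  rw [h1, sat_ble]
  push_neg
  refine exists_congr fun k => and_congr_right fun _ => exists_congr fun v =>
    and_congr_right fun _ => ?_
  simp [sat]

theorem nstep_snoc {F : FFrame} {n : ℕ} {a u v : F.W} :
    nstep F n a u → F.R u v → nstep F (n+1) a v := by
  induction n generalizing a with
  | zero => rintro rfl h; exact ⟨v, h, rfl⟩
  | succ n ih => rintro ⟨b, hb, hn⟩ h; exact ⟨b, hb, ih hn h⟩

theorem nstep_of_rtg {F : FFrame} {a b : F.W} (h : Relation.ReflTransGen F.R a b) :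
    ∃ n, nstep F n a b := by
  induction h with
  | refl => exact ⟨0, rfl⟩
  | tail _ h ih => obtain ⟨n, hn⟩ := ih; exact ⟨n+1, nstep_snoc hn h⟩

theorem nstep_iff_fun {F : FFrame} : ∀ {n : ℕ} {a b : F.W},
    nstep F n a b ↔ ∃ g : ℕ → F.W, g 0 = a ∧ g n = b ∧ ∀ i < n, F.R (g i) (g (i+1)) := by
  intro n
  induction n with
  | zero =>
    intro a b
    constructor
    · rintro rfl; exact ⟨fun _ => a, rfl, rfl, by omega⟩
    · rintro ⟨g, rfl, rfl, _⟩; rfl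
  | succ n ih =>
    intro a b
    constructor
    · rintro ⟨u, hu, hn⟩
      obtain ⟨g, hg0, hgn, hgs⟩ := ih.mp hn
      refine ⟨fun k => if k = 0 then a else g (k-1), by simp, by simp [hgn], ?_⟩
      intro i hi
      rcases Nat.eq_zero_or_pos i with rfl | hpos
      · simpa [hg0] using hu
      · have h1 : ¬ (i = 0) := by omega
        have h2 : ¬ (i + 1 = 0) := by omega
        simp only [h1, h2, if_false]
        have := hgs (i-1) (by omega)
        have e : i - 1 + 1 = i + 1 - 1 := by omega
        rwa [e] at this
    · rintro ⟨g, hg0, hgn, hgs⟩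
      refine ⟨g 1, by rw [← hg0]; exact hgs 0 (by omega), ?_⟩
      exact ih.mpr ⟨fun k => g (k+1), rfl, by simpa using hgn,
        fun i hi => hgs (i+1) (by omega)⟩

theorem nstep_shorten {F : FFrame} {a b : F.W} :
    ∀ n, nstep F n a b → ∃ m < Fintype.card F.W, nstep F m a b := by
  intro n
  induction n using Nat.strong_induction_on with
  | _ n IH =>
    intro h
    by_cases hn : n < Fintype.card F.W
    · exact ⟨n, hn, h⟩
    · push_neg at hn
      obtain ⟨g, hg0, hgn, hgs⟩ := nstep_iff_fun.mp h
      have hcard : Fintype.card F.W < Fintype.card (Fin (n+1)) := by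
        simp only [Fintype.card_fin]; omega
      obtain ⟨x, y, hxy, hgxy⟩ := Fintype.exists_ne_map_eq_of_card_lt
        (fun k : Fin (n+1) => g k.val) hcard
      have hex : ∃ i j : ℕ, i < j ∧ j ≤ n ∧ g i = g j := by
        rcases lt_or_gt_of_ne (Fin.val_ne_of_ne hxy) with hlt | hgt
        · exact ⟨x, y, hlt, by omega, hgxy⟩
        · exact ⟨y, x, hgt, by omega, hgxy.symm⟩
      obtain ⟨i, j, hij, hjn, hgij⟩ := hex
      set m := n - (j - i) with hm
      have hmn : m < n := by omega
      have hmst : nstep F m a b := by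
        refine nstep_iff_fun.mpr ⟨fun k => if k ≤ i then g k else g (k + (j - i)),
          by simp [hg0], ?_, ?_⟩
        · show (if m ≤ i then g m else g (m + (j - i))) = b
          by_cases hmi : m ≤ i
          · have hji : j = n := by omega
            have hmi' : m = i := by omega
            rw [if_pos hmi, hmi', hgij, hji, hgn]
          · rw [if_neg hmi, show m + (j - i) = n by omega, hgn]
        · intro k hk
          show F.R (if k ≤ i then g k else g (k + (j - i)))
            (if k + 1 ≤ i then g (k+1) else g (k + 1 + (j - i)))
          rcases lt_trichotomy k i with hki | hki | hki
          · rw [if_pos (by omega : k ≤ i), if_pos (by omega : k + 1 ≤ i)]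
            exact hgs k (by omega)
          · subst hki
            rw [if_pos (le_refl k), if_neg (by omega : ¬ k + 1 ≤ k), hgij,
              show k + 1 + (j - k) = j + 1 by omega]
            exact hgs j (by omega)
          · rw [if_neg (by omega : ¬ k ≤ i), if_neg (by omega : ¬ k + 1 ≤ i),
              show k + 1 + (j - i) = (k + (j - i)) + 1 by omega]
            exact hgs (k + (j-i)) (by omega)
      exact IH m hmn hmst

theorem reach_bound {F : FFrame} {N : ℕ} (hN : Fintype.card F.W ≤ N) (w : F.W) :
    ∃ k ≤ N, nstep F k F.root w := by
  obtain ⟨n, hn⟩ := nstep_of_rtg (F.rooted w)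
  obtain ⟨m, hm, hstep⟩ := nstep_shorten n hn
  exact ⟨m, by omega, hstep⟩

end Lemmas
section Lemmas2
open MForm

theorem psat_congr {α : Type} [DecidableEq α] {v₁ v₂ : α → Prop} : ∀ {φ : MForm α},
    (∀ a ∈ φ.sig, (v₁ a ↔ v₂ a)) → (psat v₁ φ ↔ psat v₂ φ) := by
  intro φ
  induction φ with
  | top => intro _; simp [psat]
  | atom p => intro h; simpa [psat] using h p (by simp [MForm.sig])
  | neg φ ih => intro h; simp only [psat]; rw [ih (fun a ha => h a (by simpa [MForm.sig] using ha))]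
  | and φ ψ ih1 ih2 =>
    intro h
    simp only [psat]
    rw [ih1 (fun a ha => h a (by simp [MForm.sig]; tauto)),
        ih2 (fun a ha => h a (by simp [MForm.sig]; tauto))]
  | box φ _ => intro _; simp [psat]

theorem sat_prop {F : FFrame} {V : F.W → ℕ → Prop} {w : F.W} : ∀ {χ : MForm ℕ},
    χ.IsProp → (sat F V w χ ↔ psat (fun p => V w p) χ) := by
  intro χ
  induction χ with
  | top => intro _; simp [sat, psat]
  | atom p => intro _; simp [sat, psat]
  | neg φ ih => intro h; simp only [sat, psat]; rw [ih h]
  | and φ ψ ih1 ih2 => intro h; simp only [sat, psat]; rw [ih1 h.1, ih2 h.2]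
  | box φ _ => intro h; exact absurd h (by simp [MForm.IsProp])

theorem sat_substAtoms {F : FFrame} {V : F.W → ℕ → Prop} {w : F.W} {β : Type}
    {s : β → MForm ℕ} : ∀ {ξ : MForm β}, ξ.IsProp →
    (sat F V w (substAtoms s ξ) ↔ psat (fun a => sat F V w (s a)) ξ) := by
  intro ξ
  induction ξ with
  | top => intro _; simp [substAtoms, sat, psat]
  | atom a => intro _; simp [substAtoms, psat]
  | neg φ ih => intro h; simp only [substAtoms, sat, psat]; rw [ih h]
  | and φ ψ ih1 ih2 => intro h; simp only [substAtoms, sat, psat]; rw [ih1 h.1, ih2 h.2]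
  | box φ _ => intro h; exact absurd h (by simp [MForm.IsProp])

theorem sig_substAtoms {α β : Type} [DecidableEq α] [DecidableEq β] {s : α → MForm β} :
    ∀ {ξ : MForm α} {b : β}, b ∈ (substAtoms s ξ).sig → ∃ a ∈ ξ.sig, b ∈ (s a).sig := by
  intro ξ
  induction ξ with
  | top => intro b hb; simp [substAtoms, MForm.sig] at hb
  | atom a => intro b hb; exact ⟨a, by simp [MForm.sig], by simpa [substAtoms] using hb⟩
  | neg φ ih => intro b hb; exact ih hb
  | and φ ψ ih1 ih2 =>
    intro b hb
    simp only [substAtoms, MForm.sig, Finset.mem_union] at hb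
    rcases hb with hb | hb
    · obtain ⟨a, ha, hm⟩ := ih1 hb; exact ⟨a, by simp [MForm.sig]; tauto, hm⟩
    · obtain ⟨a, ha, hm⟩ := ih2 hb; exact ⟨a, by simp [MForm.sig]; tauto, hm⟩
  | box φ ih => intro b hb; exact ih hb

theorem sig_bigAnd {α : Type} [DecidableEq α] {l : List (MForm α)} {σ : Finset α}
    (h : ∀ φ ∈ l, MForm.sig φ ⊆ σ) : (bigAnd l).sig ⊆ σ := by
  induction l with
  | nil => simp [bigAnd, MForm.sig]
  | cons a l ih =>
    simp only [bigAnd, MForm.sig, Finset.union_subset_iff]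
    exact ⟨h a (by simp), ih (fun φ hφ => h φ (by simp [hφ]))⟩

theorem sig_bigOr {α : Type} [DecidableEq α] {l : List (MForm α)} {σ : Finset α}
    (h : ∀ φ ∈ l, MForm.sig φ ⊆ σ) : (bigOr l).sig ⊆ σ := by
  show (bigAnd (l.map MForm.neg)).sig ⊆ σ
  refine sig_bigAnd ?_
  rintro ψ hψ
  obtain ⟨φ, hφ, rfl⟩ := List.mem_map.mp hψ
  exact h φ hφ

theorem sig_boxIter {α : Type} [DecidableEq α] {φ : MForm α} :
    ∀ {n : ℕ}, (boxIter n φ).sig = φ.sig := by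
  intro n
  induction n with
  | zero => rfl
  | succ n ih => simpa [boxIter, MForm.sig] using ih

theorem sig_ble {α : Type} [DecidableEq α] {φ : MForm α} {N : ℕ} :
    (ble N φ).sig ⊆ φ.sig := by
  refine sig_bigAnd ?_
  rintro ψ hψ
  obtain ⟨k, _, rfl⟩ := List.mem_map.mp hψ
  simp [sig_boxIter]

theorem sig_dle {α : Type} [DecidableEq α] {φ : MForm α} {N : ℕ} :
    (dle N φ).sig ⊆ φ.sig := by
  show (ble N (.neg φ)).sig ⊆ φ.sig
  exact sig_ble

theorem sig_flatten : ∀ {δ : MForm (MForm ℕ)} {a : ℕ},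
    a ∈ (flatten δ).sig → ∃ φ' ∈ MForm.sig δ, a ∈ φ'.sig := by
  intro δ
  induction δ with
  | top => intro a ha; simp [flatten, MForm.sig] at ha
  | atom φ' => intro a ha; exact ⟨φ', by simp [MForm.sig], by simpa [flatten] using ha⟩
  | neg δ ih => intro a ha; exact ih ha
  | and δ₁ δ₂ ih1 ih2 =>
    intro a ha
    simp only [flatten, MForm.sig, Finset.mem_union] at ha
    rcases ha with ha | ha
    · obtain ⟨φ', h1, h2⟩ := ih1 ha; exact ⟨φ', by simp [MForm.sig]; tauto, h2⟩
    · obtain ⟨φ', h1, h2⟩ := ih2 ha; exact ⟨φ', by simp [MForm.sig]; tauto, h2⟩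
  | box δ ih => intro a ha; exact ih ha

theorem isProp_bigAnd {α : Type} {l : List (MForm α)} (h : ∀ φ ∈ l, MForm.IsProp φ) :
    (bigAnd l).IsProp := by
  induction l with
  | nil => trivial
  | cons a l ih => exact ⟨h a (by simp), ih (fun φ hφ => h φ (by simp [hφ]))⟩

theorem isProp_tr {F : FFrame} : ∀ {φ : MForm ℕ} {w : F.W}, (tr F φ w).IsProp := by
  intro φ
  induction φ with
  | top => intro w; trivial
  | atom p => intro w; trivial
  | neg φ ih => intro w; exact ih
  | and φ ψ ih1 ih2 => intro w; exact ⟨ih1, ih2⟩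
  | box φ ih =>
    intro w
    show MForm.IsProp (bigAnd _)
    refine isProp_bigAnd ?_
    rintro ψ hψ
    obtain ⟨w', _, rfl⟩ := List.mem_map.mp hψ
    exact ih

theorem sig_tr {F : FFrame} {σ : Finset ℕ} : ∀ {φ : MForm ℕ} {w : F.W},
    φ.sig ⊆ σ → (tr F φ w).sig ⊆ σ ×ˢ (Finset.univ : Finset F.W) := by
  intro φ
  induction φ with
  | top => intro w _; simp [tr, MForm.sig]
  | atom p => intro w h
              simp only [tr, MForm.sig]
              intro x hx
              simp only [Finset.mem_singleton] at hx
              subst hx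
              simp only [Finset.mem_product, Finset.mem_univ, and_true]
              exact h (by simp [MForm.sig])
  | neg φ ih => intro w h; exact ih h
  | and φ ψ ih1 ih2 =>
    intro w h
    show (MForm.sig (tr F φ w) ∪ MForm.sig (tr F ψ w)) ⊆ _
    refine Finset.union_subset (ih1 ?_) (ih2 ?_) <;>
      intro a ha <;> apply h <;> simp [MForm.sig, ha]
  | box φ ih =>
    intro w h
    show MForm.sig (bigAnd _) ⊆ _
    refine sig_bigAnd ?_
    rintro ψ hψ
    obtain ⟨w', _, rfl⟩ := List.mem_map.mp hψ
    exact ih h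

theorem mem_filter_univ {α : Type} [Fintype α] {p : α → Prop} {a : α} :
    a ∈ @Finset.filter α p (Classical.decPred p) Finset.univ ↔ p a := by
  rw [@Finset.mem_filter α p (Classical.decPred p)]
  simp

theorem psat_tr {F : FFrame} {v : ℕ × F.W → Prop} : ∀ {φ : MForm ℕ} {w : F.W},
    psat v (tr F φ w) ↔ sat F (fun u p => v (p, u)) w φ := by
  intro φ
  induction φ with
  | top => intro w; simp [tr, psat, sat]
  | atom p => intro w; simp [tr, psat, sat]
  | neg φ ih => intro w; simp only [tr, psat, sat]; rw [ih]
  | and φ ψ ih1 ih2 => intro w; simp only [tr, psat, sat]; rw [ih1, ih2]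
  | box φ ih =>
    intro w
    show psat v (bigAnd _) ↔ _
    rw [psat_bigAnd]
    constructor
    · intro h u hu
      refine ih.mp (h _ (List.mem_map_of_mem ?_))
      rw [Finset.mem_toList, mem_filter_univ]
      exact hu
    · intro h ψ hψ
      obtain ⟨w', hw', rfl⟩ := List.mem_map.mp hψ
      rw [Finset.mem_toList, mem_filter_univ] at hw'
      exact ih.mpr (h w' hw')

theorem tr_imp {F : FFrame} {φ ψ : MForm ℕ} {w : F.W} :
    tr F (φ.imp ψ) w = (tr F φ w).imp (tr F ψ w) := by
  simp [MForm.imp, tr]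

theorem taut_tr_of_log {ι : Type} (Fr : ι → FFrame) {θ : MForm ℕ} (h : θ ∈ Log Fr) (i : ι) :
    PTaut (tr (Fr i) θ (Fr i).root) := by
  intro v
  exact psat_tr.mpr (h i _)

end Lemmas2
section Lemmas3
open MForm

theorem exists_fM {σ : Finset ℕ} {Φ : Finset (MForm ℕ)} (hΦ : IsEME σ Φ)
    (F : FFrame) (V : F.W → ℕ → Prop) :
    ∃ f : F.W → MForm ℕ, ∀ w, f w ∈ Φ ∧ sat F V w (f w) ∧
      ∀ φ' ∈ Φ, sat F V w φ' → φ' = f w := by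
  have h : ∀ w : F.W, ∃ φ' : MForm ℕ, φ' ∈ Φ ∧ sat F V w φ' ∧
      ∀ ψ ∈ Φ, sat F V w ψ → ψ = φ' := by
    intro w
    obtain ⟨φ', hφ', hps⟩ := hΦ.2.1 (fun p => V w p)
    refine ⟨φ', hφ', (sat_prop (hΦ.1 φ' hφ').1).mpr hps, ?_⟩
    intro ψ hψ hs
    by_contra hne
    exact hΦ.2.2 ψ hψ φ' hφ' hne (fun p => V w p)
      ⟨(sat_prop (hΦ.1 ψ hψ).1).mp hs, hps⟩
  choose f hf using h
  exact ⟨f, fun w => (hf w)⟩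

theorem sat_flatten_iff_asat {σ : Finset ℕ} {Φ : Finset (MForm ℕ)} (hΦ : IsEME σ Φ)
    {F : FFrame} {V : F.W → ℕ → Prop} {f : F.W → MForm ℕ}
    (hf : ∀ w, f w ∈ Φ ∧ sat F V w (f w) ∧ ∀ φ' ∈ Φ, sat F V w φ' → φ' = f w) :
    ∀ {δ : MForm (MForm ℕ)}, MForm.sig δ ⊆ Φ →
      ∀ w, (sat F V w (flatten δ) ↔ asat F f w δ) := by
  intro δ
  induction δ with
  | top => intro _ w; simp [flatten, sat, asat]
  | atom φ' =>
    intro hsub w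
    have hφ' : φ' ∈ Φ := hsub (by simp [MForm.sig])
    show sat F V w φ' ↔ f w = φ'
    constructor
    · intro hs; exact ((hf w).2.2 φ' hφ' hs).symm
    · rintro rfl; exact (hf w).2.1
  | neg δ ih =>
    intro hsub w
    show ¬ _ ↔ ¬ _
    rw [ih hsub w]
  | and δ₁ δ₂ ih1 ih2 =>
    intro hsub w
    show (_ ∧ _) ↔ (_ ∧ _)
    rw [ih1 (fun a ha => hsub (by simp [MForm.sig]; tauto)) w,
        ih2 (fun a ha => hsub (by simp [MForm.sig]; tauto)) w]
  | box δ ih =>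
    intro hsub w
    show (∀ v, F.R w v → sat F V v (flatten δ)) ↔ (∀ v, F.R w v → asat F f v δ)
    exact forall_congr' fun v => imp_congr_right fun _ => ih hsub v

theorem mem_fList {F : FFrame} {Φ : Finset (MForm ℕ)} {δ : MForm (MForm ℕ)}
    {f : F.W → MForm ℕ} :
    f ∈ fList F Φ δ ↔ (∀ w, f w ∈ Φ) ∧ asat F f F.root δ := by
  rw [fList, List.mem_map]
  constructor
  · rintro ⟨f', hf', rfl⟩
    rw [Finset.mem_toList, mem_filter_univ] at hf'
    exact ⟨fun w => (f' w).2, hf'⟩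
  · rintro ⟨h1, h2⟩
    refine ⟨fun w => ⟨f w, h1 w⟩, ?_, rfl⟩
    rw [Finset.mem_toList, mem_filter_univ]
    exact h2

theorem sat_coverFml_iff {σ : Finset ℕ} {Φ : Finset (MForm ℕ)} {F : FFrame}
    {V : F.W → ℕ → Prop} {N : ℕ} {w : F.W} :
    sat F V w (coverFml σ Φ N) ↔ ∀ φ' ∈ Φ, ∀ p ∈ σ,
      sat F V w (MForm.imp (dle N (.and φ' (.atom p))) (ble N (MForm.imp φ' (.atom p)))) := by
  rw [coverFml, sat_bigAnd]
  constructor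
  · intro h φ' hφ' p hp
    have := h _ (List.mem_map_of_mem (Finset.mem_toList.mpr hφ'))
    rw [sat_bigAnd] at this
    exact this _ (List.mem_map_of_mem (Finset.mem_toList.mpr hp))
  · intro h ψ hψ
    obtain ⟨φ', hφ', rfl⟩ := List.mem_map.mp hψ
    rw [sat_bigAnd]
    intro χ hχ
    obtain ⟨p, hp, rfl⟩ := List.mem_map.mp hχ
    exact h φ' (Finset.mem_toList.mp hφ') p (Finset.mem_toList.mp hp)

theorem sat_coverFml_of_isCover {σ : Finset ℕ} {Φ : Finset (MForm ℕ)} {F : FFrame}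
    {V : F.W → ℕ → Prop} {N : ℕ} (hc : IsCover σ Φ F V) :
    sat F V F.root (coverFml σ Φ N) := by
  rw [sat_coverFml_iff]
  intro φ' hφ' p hp
  rw [sat_imp, sat_dle]
  rintro ⟨k, hk, v, hv, hsv⟩
  rw [sat_ble]
  intro k' hk' u hu
  rw [sat_imp]
  intro hsu
  have hsv1 : sat F V v φ' := hsv.1
  have := hc φ' hφ' v u hsv1 hsu (.atom p) trivial
    (by intro a ha; simp only [MForm.sig, Finset.mem_singleton] at ha; rwa [ha])
  exact (this.mp hsv.2 : V u p)

theorem cover_dle_iff {σ : Finset ℕ} {Φ : Finset (MForm ℕ)} {F : FFrame}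
    {V : F.W → ℕ → Prop} {N : ℕ} (hN : Fintype.card F.W ≤ N)
    (hcov : sat F V F.root (coverFml σ Φ N)) {φ' : MForm ℕ} (hφ' : φ' ∈ Φ)
    {p : ℕ} (hp : p ∈ σ) {w : F.W} (hw : sat F V w φ') :
    sat F V F.root (dle N (.and φ' (.atom p))) ↔ V w p := by
  rw [sat_coverFml_iff] at hcov
  have hc := hcov φ' hφ' p hp
  rw [sat_imp] at hc
  constructor
  · intro h
    have hb := hc h
    rw [sat_ble] at hb
    obtain ⟨k, hk, hstep⟩ := reach_bound hN w
    have := hb k hk w hstep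
    rw [sat_imp] at this
    exact this hw
  · intro h
    rw [sat_dle]
    obtain ⟨k, hk, hstep⟩ := reach_bound hN w
    exact ⟨k, hk, w, hstep, hw, h⟩

theorem bisim_invariance {σ : Finset ℕ} {F₁ : FFrame} {V₁ : F₁.W → ℕ → Prop}
    {F₂ : FFrame} {V₂ : F₂.W → ℕ → Prop} {Z : F₁.W → F₂.W → Prop}
    (h : IsBisim σ F₁ V₁ F₂ V₂ Z) :
    ∀ {ψ : MForm ℕ}, ψ.sig ⊆ σ → ∀ {w₁ w₂}, Z w₁ w₂ → (sat F₁ V₁ w₁ ψ ↔ sat F₂ V₂ w₂ ψ) := by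
  intro ψ
  induction ψ with
  | top => intro _ w₁ w₂ _; simp [sat]
  | atom p =>
    intro hsub w₁ w₂ hZ
    exact h.1 w₁ w₂ hZ p (hsub (by simp [MForm.sig]))
  | neg ψ ih =>
    intro hsub w₁ w₂ hZ
    show ¬ _ ↔ ¬ _
    rw [ih hsub hZ]
  | and ψ₁ ψ₂ ih1 ih2 =>
    intro hsub w₁ w₂ hZ
    show (_ ∧ _) ↔ (_ ∧ _)
    rw [ih1 (fun a ha => hsub (by simp [MForm.sig]; tauto)) hZ,
        ih2 (fun a ha => hsub (by simp [MForm.sig]; tauto)) hZ]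
  | box ψ ih =>
    intro hsub w₁ w₂ hZ
    constructor
    · intro hs v₂ hv₂
      obtain ⟨v₁, hv₁, hZv⟩ := h.2.2 w₁ w₂ v₂ hZ hv₂
      exact (ih hsub hZv).mp (hs v₁ hv₁)
    · intro hs v₁ hv₁
      obtain ⟨v₂, hv₂, hZv⟩ := h.2.1 w₁ w₂ v₁ hZ hv₁
      exact (ih hsub hZv).mpr (hs v₂ hv₂)

theorem abisim_glue {F₁ : FFrame} {f₁ : F₁.W → MForm ℕ} {F₂ : FFrame} {f₂ : F₂.W → MForm ℕ}
    {F₃ : FFrame} {f₃ : F₃.W → MForm ℕ}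
    (h13 : ABisimRoot F₁ f₁ F₃ f₃) (h23 : ABisimRoot F₂ f₂ F₃ f₃) :
    ABisimRoot F₁ f₁ F₂ f₂ := by
  obtain ⟨Z₁, hZ₁, hr₁⟩ := h13
  obtain ⟨Z₂, hZ₂, hr₂⟩ := h23
  refine ⟨fun w₁ w₂ => ∃ w₃, Z₁ w₁ w₃ ∧ Z₂ w₂ w₃, ⟨?_, ?_, ?_⟩, F₃.root, hr₁, hr₂⟩
  · rintro w₁ w₂ ⟨w₃, h1, h2⟩
    rw [hZ₁.1 w₁ w₃ h1, hZ₂.1 w₂ w₃ h2]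
  · rintro w₁ w₂ v₁ ⟨w₃, h1, h2⟩ hR
    obtain ⟨v₃, hR₃, hZv₁⟩ := hZ₁.2.1 w₁ w₃ v₁ h1 hR
    obtain ⟨v₂, hR₂, hZv₂⟩ := hZ₂.2.2 w₂ w₃ v₃ h2 hR₃
    exact ⟨v₂, hR₂, v₃, hZv₁, hZv₂⟩
  · rintro w₁ w₂ v₂ ⟨w₃, h1, h2⟩ hR
    obtain ⟨v₃, hR₃, hZv₂⟩ := hZ₂.2.1 w₂ w₃ v₂ h2 hR
    obtain ⟨v₁, hR₁, hZv₁⟩ := hZ₁.2.2 w₁ w₃ v₃ h1 hR₃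
    exact ⟨v₁, hR₁, v₃, hZv₁, hZv₂⟩

end Lemmas3
section Final
open MForm

theorem sig_imp {α : Type} [DecidableEq α] {a b : MForm α} :
    (MForm.imp a b).sig = a.sig ∪ b.sig := by
  simp [MForm.imp, MForm.sig]

theorem sig_rt {σ : Finset ℕ} {N : ℕ} {Γ : Finset (Finset (MForm ℕ))}
    {Δ : Finset (MForm ℕ) → Finset (MForm (MForm ℕ))} {F : FFrame} {ξF : MForm (ℕ × F.W)}
    (h1 : ∀ Φ ∈ Γ, ∀ φ' ∈ Φ, MForm.sig φ' ⊆ σ)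
    (h2 : ∀ Φ ∈ Γ, ∀ δ ∈ Δ Φ, MForm.sig δ ⊆ Φ)
    (hξ : MForm.sig ξF ⊆ σ ×ˢ (Finset.univ : Finset F.W)) :
    (rt σ N Γ Δ F ξF).sig ⊆ σ := by
  rw [rt]
  refine sig_bigAnd ?_
  rintro θ hθ
  obtain ⟨Φ, hΦ, rfl⟩ := List.mem_map.mp hθ
  rw [Finset.mem_toList] at hΦ
  refine sig_bigAnd ?_
  rintro θ' hθ'
  obtain ⟨δ, hδ, rfl⟩ := List.mem_map.mp hθ'
  rw [Finset.mem_toList] at hδ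
  rw [sig_imp]
  refine Finset.union_subset ?_ ?_
  · show (MForm.sig (coverFml σ Φ N) ∪ MForm.sig (flatten δ)) ⊆ σ
    refine Finset.union_subset ?_ ?_
    · rw [coverFml]
      refine sig_bigAnd ?_
      rintro χ hχ
      obtain ⟨φ', hφ', rfl⟩ := List.mem_map.mp hχ
      rw [Finset.mem_toList] at hφ'
      refine sig_bigAnd ?_
      rintro χ' hχ'
      obtain ⟨p, hp, rfl⟩ := List.mem_map.mp hχ'
      rw [Finset.mem_toList] at hp
      rw [sig_imp]
      refine Finset.union_subset (le_trans sig_dle ?_) (le_trans sig_ble ?_)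
      · show (MForm.sig φ' ∪ MForm.sig (MForm.atom p)) ⊆ σ
        refine Finset.union_subset (h1 Φ hΦ φ' hφ') ?_
        intro a ha
        simp only [MForm.sig, Finset.mem_singleton] at ha
        rwa [ha]
      · rw [sig_imp]
        refine Finset.union_subset (h1 Φ hΦ φ' hφ') ?_
        intro a ha
        simp only [MForm.sig, Finset.mem_singleton] at ha
        rwa [ha]
    · intro a ha
      obtain ⟨φ', hφ', ha'⟩ := sig_flatten ha
      exact h1 Φ hΦ φ' (h2 Φ hΦ δ hδ hφ') ha'
  · refine sig_bigOr ?_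
    rintro χ hχ
    obtain ⟨f, hf, rfl⟩ := List.mem_map.mp hχ
    have hfΦ : ∀ w, f w ∈ Φ := (mem_fList.mp hf).1
    intro a ha
    obtain ⟨pw, hpw, ha'⟩ := sig_substAtoms ha
    have hpσ : pw.1 ∈ σ := (Finset.mem_product.mp (hξ hpw)).1
    have := sig_dle ha'
    simp only [MForm.sig, Finset.mem_union, Finset.mem_singleton] at this
    rcases this with h | h
    · exact h1 Φ hΦ _ (hfΦ pw.2) h
    · rwa [h]

end Final
set_option maxHeartbeats 1000000 in
/-- for a tabular quasi-normal logic `L = Log Fr` (finite family of finite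
rooted frames), a σ-encoding for `L`, and uniform `σ_F`-interpolants `ξ_F` of `tr_{F,0}(φ)`
in propositional logic (one for each frame of the family), the disjunction
`⋁_{F∈𝓕} rt_{F,L}(ξ_F)` is a strongest `L(σ)`-implicate of `φ`
(where `N = max{|F| : F ∈ 𝓕}`). -/
theorem stmt10 {ι : Type} [Fintype ι] (Fr : ι → FFrame)
    (φ : MForm ℕ) (σ : Finset ℕ) (hσ : σ ⊆ φ.sig)
    (Γ : Finset (Finset (MForm ℕ))) (Δ : Finset (MForm ℕ) → Finset (MForm (MForm ℕ)))
    (henc : IsEncoding Fr σ Γ Δ)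
    (ξ : ∀ i, MForm (ℕ × (Fr i).W))
    (hξ : ∀ i, UPropInt (σ ×ˢ Finset.univ) (tr (Fr i) φ (Fr i).root) (ξ i)) :
    StrImp (Log Fr) σ φ
      (bigOr ((Finset.univ : Finset ι).toList.map (fun i =>
        rt σ (Finset.univ.sup (fun j => Fintype.card (Fr j).W)) Γ Δ (Fr i) (ξ i)))) := by
  set N := (Finset.univ : Finset ι).sup (fun j => Fintype.card (Fr j).W) with hNdef
  have hN : ∀ i, Fintype.card (Fr i).W ≤ N := fun i =>
    Finset.le_sup (f := fun j => Fintype.card (Fr j).W) (Finset.mem_univ i)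
  obtain ⟨hEME, hDelta, hmodels⟩ := henc
  have h1 : ∀ Φ ∈ Γ, ∀ φ' ∈ Φ, MForm.sig φ' ⊆ σ := fun Φ hΦ φ' hφ' =>
    ((hEME Φ hΦ).1 φ' hφ').2
  have h2 : ∀ Φ ∈ Γ, ∀ δ ∈ Δ Φ, MForm.sig δ ⊆ Φ := fun Φ hΦ δ hδ =>
    (hDelta Φ hΦ δ hδ).1
  refine ⟨?_, ?_, ?_⟩
  · -- signature
    refine sig_bigOr ?_
    rintro θ hθ
    obtain ⟨i, _, rfl⟩ := List.mem_map.mp hθ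
    exact sig_rt h1 h2 (hξ i).2.1
  · -- φ → χ is valid
    intro i V
    rw [sat_imp]
    intro hφsat
    rw [sat_bigOr]
    refine ⟨_, List.mem_map_of_mem (Finset.mem_toList.mpr (Finset.mem_univ i)), ?_⟩
    rw [rt, sat_bigAnd]
    rintro θ hθ
    obtain ⟨Φ, hΦ, rfl⟩ := List.mem_map.mp hθ
    rw [Finset.mem_toList] at hΦ
    rw [sat_bigAnd]
    rintro θ' hθ'
    obtain ⟨δ, hδ, rfl⟩ := List.mem_map.mp hθ'
    rw [Finset.mem_toList] at hδ
    rw [sat_imp]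
    intro hcd
    have hcd' : sat (Fr i) V (Fr i).root (coverFml σ Φ N) ∧
        sat (Fr i) V (Fr i).root (flatten δ) := hcd
    obtain ⟨f, hf⟩ := exists_fM (hEME Φ hΦ) (Fr i) V
    have hasat : asat (Fr i) f (Fr i).root δ :=
      (sat_flatten_iff_asat (hEME Φ hΦ) hf (h2 Φ hΦ δ hδ) _).mp hcd'.2
    rw [sat_bigOr]
    refine ⟨_, List.mem_map_of_mem (mem_fList.mpr ⟨fun w => (hf w).1, hasat⟩), ?_⟩
    rw [xiSub, sat_substAtoms (hξ i).1]
    have hPT : psat (vM (Fr i) V) (ξ i) := by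
      have := (hξ i).2.2.1 (vM (Fr i) V)
      rw [psat_imp] at this
      exact this (psat_tr.mpr hφsat)
    refine (psat_congr ?_).mpr hPT
    intro pw hpw
    have hmem := Finset.mem_product.mp ((hξ i).2.1 hpw)
    exact (cover_dle_iff (hN i) hcd'.1 ((hf pw.2).1) hmem.1 ((hf pw.2).2.1))
  · -- strongest
    intro ψ hψσ hψL
    intro j V
    rw [sat_imp]
    intro hχ
    rw [sat_bigOr] at hχ
    obtain ⟨θ, hθ, hrt⟩ := hχ
    obtain ⟨i, _, rfl⟩ := List.mem_map.mp hθ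
    obtain ⟨Φ, hΦ, hcover, δ, hδ, hflat⟩ := hmodels j V
    rw [rt, sat_bigAnd] at hrt
    have hrt2 := hrt _ (List.mem_map_of_mem (Finset.mem_toList.mpr hΦ))
    rw [sat_bigAnd] at hrt2
    have hrt3 := hrt2 _ (List.mem_map_of_mem (Finset.mem_toList.mpr hδ))
    rw [sat_imp] at hrt3
    have hcovj : sat (Fr j) V (Fr j).root (coverFml σ Φ N) :=
      sat_coverFml_of_isCover hcover
    have hand : sat (Fr j) V (Fr j).root
        (MForm.and (coverFml σ Φ N) (flatten δ)) := ⟨hcovj, hflat⟩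
    have hdis := hrt3 hand
    rw [sat_bigOr] at hdis
    obtain ⟨χ', hχ', hxis⟩ := hdis
    obtain ⟨f, hfmem, rfl⟩ := List.mem_map.mp hχ'
    obtain ⟨hfΦ, hasatf⟩ := mem_fList.mp hfmem
    obtain ⟨fm, hfm⟩ := exists_fM (hEME Φ hΦ) (Fr j) V
    have hasatfm : asat (Fr j) fm (Fr j).root δ :=
      (sat_flatten_iff_asat (hEME Φ hΦ) hfm (h2 Φ hΦ δ hδ) _).mp hflat
    obtain ⟨i₀, f₀, hf₀Φ, hP⟩ := (hDelta Φ hΦ δ hδ).2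
    have hab1 : ABisimRoot (Fr j) fm (Fr i₀) f₀ :=
      (hP j fm (fun w => (hfm w).1)).mp hasatfm
    have hab2 : ABisimRoot (Fr i) f (Fr i₀) f₀ := (hP i f hfΦ).mp hasatf
    obtain ⟨Z, hZ, hZr⟩ := abisim_glue hab1 hab2
    -- the new model on Fr i
    set V' : (Fr i).W → ℕ → Prop :=
      fun w p => sat (Fr j) V (Fr j).root (dle N (.and (f w) (.atom p))) with hV'def
    -- V' satisfies ξ i propositionally
    have hpsatξ : psat (fun pw => V' pw.2 pw.1) (ξ i) := by
      have := (sat_substAtoms (F := Fr j) (V := V) (w := (Fr j).root) (hξ i).1).mp hxis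
      exact this
    -- ψ is true in the new model
    have htaut : PTaut ((tr (Fr i) φ (Fr i).root).imp (tr (Fr i) ψ (Fr i).root)) := by
      intro v
      have h := taut_tr_of_log Fr hψL i v
      rwa [tr_imp] at h
    have hξψ : PTaut ((ξ i).imp (tr (Fr i) ψ (Fr i).root)) := by
      refine (hξ i).2.2.2 _ isProp_tr ?_ htaut
      intro a ha
      exact sig_tr hψσ (Finset.mem_inter.mp ha).1
    have hψV' : sat (Fr i) V' (Fr i).root ψ := by
      have hp : psat (fun pw => V' pw.2 pw.1) (tr (Fr i) ψ (Fr i).root) := by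
        have := hξψ (fun pw => V' pw.2 pw.1)
        rw [psat_imp] at this
        exact this hpsatξ
      exact psat_tr.mp hp
    -- bisimulation between the new model and the original
    have hbis : IsBisim σ (Fr i) V' (Fr j) V (fun w u => Z u w) := by
      refine ⟨?_, ?_, ?_⟩
      · intro w u hZuw p hp
        have hfw : fm u = f w := hZ.1 u w hZuw
        have hsatu : sat (Fr j) V u (f w) := by rw [← hfw]; exact (hfm u).2.1
        exact cover_dle_iff (hN j) hcovj (hfΦ w) hp hsatu
      · intro w u v₁ hZuw hR
        obtain ⟨v₂, hR₂, hZv⟩ := hZ.2.2 u w v₁ hZuw hR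
        exact ⟨v₂, hR₂, hZv⟩
      · intro w u v₂ hZuw hR
        obtain ⟨v₁, hR₁, hZv⟩ := hZ.2.1 u w v₂ hZuw hR
        exact ⟨v₁, hR₁, hZv⟩
    exact (bisim_invariance hbis hψσ hZr).mp hψV'
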